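/- arXiv:cs/0506016 — 5 statements merged into one kernel-verified Lean document; each statement's English description precedes it below -/
import Mathlib

section
/- Given a probability distribution p_1, …, p_n on {1, …, n} with every p_i > 0, there exist natural numbers d_1, …, d_n and natural numbers m_1, …, m_n such that, writing x_i = m_i · 2^{-d_i}, the following hold: x_1 ≥ 0; x_i + 2^{-d_i} ≤ x_{i+1} for every 1 ≤ i < n; x_n + 2^{-d_n} ≤ 1; and d_i < log₂(1/p_i) + 2 for every i. (The intervals [x_i, x_i + 2^{-d_i}) are pairwise disjoint dyadic subintervals of [0,1) appearing in left-to-right order, which is exactly the statement that there is an alphabetic prefix-free binary code, equivalently a strict ordered binary tree, whose i-th leaf from the left has depth d_i < log₂(1/p_i) + 2.) -/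
/-- Mehlhorn's theorem as disjoint ordered dyadic intervals: there exist codeword
lengths `d i` and positions `m i` so that the intervals `[mᵢ2^{-dᵢ}, (mᵢ+1)2^{-dᵢ})`
lie in `[0,1)` in left-to-right order, with `d i < log₂(1/p i) + 2`. -/
theorem stmt1 (n : ℕ) (hn : 0 < n) (p : Fin n → ℝ)
    (hp : ∀ i, 0 < p i) (hsum : ∑ i, p i = 1) :
    ∃ d m : Fin n → ℕ,
      (0 : ℝ) ≤ (m ⟨0, hn⟩ : ℝ) * (2 : ℝ) ^ (-(d ⟨0, hn⟩ : ℤ)) ∧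
      (∀ i : Fin n, ∀ h : i.val + 1 < n,
        (m i : ℝ) * (2 : ℝ) ^ (-(d i : ℤ)) + (2 : ℝ) ^ (-(d i : ℤ)) ≤
          (m ⟨i.val + 1, h⟩ : ℝ) * (2 : ℝ) ^ (-(d ⟨i.val + 1, h⟩ : ℤ))) ∧
      ((m ⟨n - 1, Nat.sub_lt hn one_pos⟩ : ℝ) *
          (2 : ℝ) ^ (-(d ⟨n - 1, Nat.sub_lt hn one_pos⟩ : ℤ)) +
          (2 : ℝ) ^ (-(d ⟨n - 1, Nat.sub_lt hn one_pos⟩ : ℤ)) ≤ 1) ∧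
      ∀ i, (d i : ℝ) < Real.logb 2 (1 / p i) + 2 := by
  classical
  -- basic facts about p
  have hple : ∀ i, p i ≤ 1 := by
    intro i
    rw [← hsum]
    exact Finset.single_le_sum (fun j _ => (hp j).le) (Finset.mem_univ i)
  -- cumulative sums and midpoints
  set s : Fin n → ℝ := fun i => ∑ j ∈ Finset.Iio i, p j with hsdef
  set c : Fin n → ℝ := fun i => s i + p i / 2 with hcdef
  -- codeword lengths
  set d : Fin n → ℕ := fun i => (⌈Real.logb 2 (2 / p i)⌉).toNat with hddef
  set m : Fin n → ℕ := fun i => ⌊c i * 2 ^ (d i)⌋₊ with hmdef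
  have hs0 : ∀ i, 0 ≤ s i := fun i =>
    Finset.sum_nonneg fun j _ => (hp j).le
  have hc0 : ∀ i, 0 ≤ c i := fun i =>
    add_nonneg (hs0 i) (by linarith [hp i])
  have hL1 : ∀ i, (1 : ℝ) ≤ Real.logb 2 (2 / p i) := by
    intro i
    have h2 : (2 : ℝ) ≤ 2 / p i := by
      rw [le_div_iff₀ (hp i)]
      nlinarith [hple i]
    calc (1 : ℝ) = Real.logb 2 2 := by simp
      _ ≤ Real.logb 2 (2 / p i) :=
        Real.logb_le_logb_of_le (by norm_num) (by norm_num) h2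
  have hdceil : ∀ i, ((d i : ℤ) : ℝ) = (⌈Real.logb 2 (2 / p i)⌉ : ℝ) := by
    intro i
    have : (1 : ℤ) ≤ ⌈Real.logb 2 (2 / p i)⌉ := by
      exact_mod_cast Int.le_ceil_iff.mpr (by push_cast; linarith [hL1 i])
    simp only [hddef]
    rw [Int.toNat_of_nonneg (by linarith)]
  have hdL : ∀ i, Real.logb 2 (2 / p i) ≤ (d i : ℝ) := by
    intro i
    have := Int.le_ceil (Real.logb 2 (2 / p i))
    have h := hdceil i
    push_cast at h ⊢
    linarith
  -- 2^{-d i} ≤ p i / 2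
  have hpow : ∀ i, (2 : ℝ) ^ (-(d i : ℤ)) ≤ p i / 2 := by
    intro i
    have hpos : (0 : ℝ) < 2 / p i := div_pos two_pos (hp i)
    have h1 : 2 / p i ≤ (2 : ℝ) ^ (d i : ℝ) := by
      calc 2 / p i = (2 : ℝ) ^ Real.logb 2 (2 / p i) :=
            (Real.rpow_logb (by norm_num) (by norm_num) hpos).symm
        _ ≤ (2 : ℝ) ^ (d i : ℝ) :=
            Real.rpow_le_rpow_of_exponent_le (by norm_num) (hdL i)
    have h2 : 2 / p i ≤ (2 : ℝ) ^ (d i) := by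
      rwa [Real.rpow_natCast] at h1
    have h3 : (0 : ℝ) < (2 : ℝ) ^ (d i) := by positivity
    rw [zpow_neg, zpow_natCast, inv_le_comm₀ h3 (half_pos (hp i)), inv_div]
    exact h2
  -- floor bounds: x i ≤ c i < x i + 2^{-d i}
  have hinv : ∀ i, (2 : ℝ) ^ (-(d i : ℤ)) = ((2 : ℝ) ^ (d i))⁻¹ := by
    intro i; rw [zpow_neg, zpow_natCast]
  have hxle : ∀ i, (m i : ℝ) * (2 : ℝ) ^ (-(d i : ℤ)) ≤ c i := by
    intro i
    have h3 : (0 : ℝ) < (2 : ℝ) ^ (d i) := by positivity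
    have h := Nat.floor_le (a := c i * (2:ℝ) ^ (d i)) (mul_nonneg (hc0 i) h3.le)
    rw [hinv i]
    calc (m i : ℝ) * ((2:ℝ) ^ (d i))⁻¹
        ≤ (c i * (2:ℝ) ^ (d i)) * ((2:ℝ) ^ (d i))⁻¹ :=
          mul_le_mul_of_nonneg_right h (inv_nonneg.mpr h3.le)
      _ = c i := by field_simp
  have hxgt : ∀ i, c i < (m i : ℝ) * (2 : ℝ) ^ (-(d i : ℤ)) + (2 : ℝ) ^ (-(d i : ℤ)) := by
    intro i
    have h3 : (0 : ℝ) < (2 : ℝ) ^ (d i) := by positivity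
    have h4 : c i * (2:ℝ) ^ (d i) < ((m i : ℝ) + 1) := by
      have := Nat.lt_floor_add_one (c i * (2:ℝ) ^ (d i))
      push_cast at this ⊢
      exact this
    rw [hinv i]
    calc c i = c i * (2:ℝ) ^ (d i) * ((2:ℝ) ^ (d i))⁻¹ := by field_simp
      _ < ((m i : ℝ) + 1) * ((2:ℝ) ^ (d i))⁻¹ := by
          apply mul_lt_mul_of_pos_right h4 (by positivity)
      _ = (m i : ℝ) * ((2:ℝ) ^ (d i))⁻¹ + ((2:ℝ) ^ (d i))⁻¹ := by ring
  -- successor sum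
  have hsucc : ∀ (i : Fin n) (h : i.val + 1 < n), s ⟨i.val + 1, h⟩ = s i + p i := by
    intro i h
    have hIio : Finset.Iio (⟨i.val + 1, h⟩ : Fin n) = insert i (Finset.Iio i) := by
      rw [Finset.Iio_insert]
      ext j
      simp only [Finset.mem_Iio, Finset.mem_Iic, Fin.lt_def, Fin.le_def]
      omega
    simp only [hsdef, hIio]
    rw [Finset.sum_insert (by simp)]
    ring
  have hsle : ∀ i, s i + p i ≤ 1 := by
    intro i
    have : s i + p i = ∑ j ∈ insert i (Finset.Iio i), p j := by
      rw [Finset.sum_insert (by simp)]; ring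
    rw [this, ← hsum]
    exact Finset.sum_le_sum_of_subset_of_nonneg (Finset.subset_univ _)
      (fun j _ _ => (hp j).le)
  refine ⟨d, m, ?_, ?_, ?_, ?_⟩
  · positivity
  · intro i h
    have h1 := hxle i
    have h2 := hxgt ⟨i.val + 1, h⟩
    have h3 := hpow i
    have h4 := hpow ⟨i.val + 1, h⟩
    have h5 := hsucc i h
    simp only [hcdef] at h1 h2
    rw [h5] at h2
    linarith
  · set j : Fin n := ⟨n - 1, Nat.sub_lt hn one_pos⟩
    have h2 := hxle j
    have h3 := hpow j
    have h4 := hsle j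
    simp only [hcdef] at h2
    linarith
  · intro i
    have h1 : (⌈Real.logb 2 (2 / p i)⌉ : ℝ) < Real.logb 2 (2 / p i) + 1 :=
      Int.ceil_lt_add_one _
    have h2 : Real.logb 2 (2 / p i) = 1 + Real.logb 2 (1 / p i) := by
      rw [show (2 : ℝ) / p i = 2 * (1 / p i) by ring,
        Real.logb_mul (by norm_num) (one_div_ne_zero (hp i).ne')]
      simp
    have h := hdceil i
    push_cast at h
    rw [h]
    linarith
end

section
/- Let p_1, …, p_n be a probability distribution on {1, …, n} with every p_i > 0. For 1 ≤ i ≤ n set S_i = p_i/2 + ∑_{j=1}^{i-1} p_j and ℓ_i = ⌈log₂(2/p_i)⌉. Then for all i ≠ j, writing m = min(ℓ_i, ℓ_j), we have ⌊2^m · S_i⌋ ≠ ⌊2^m · S_j⌋; that is, the first min(ℓ_i, ℓ_j) bits of the binary expansions of S_i and S_j differ, so the code whose i-th codeword is the first ℓ_i bits of the binary expansion of S_i is prefix-free. -/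
lemma pow_neg_le_half (pk : ℝ) (hpk : 0 < pk) (l : ℤ) (hl : l = ⌈Real.logb 2 (2 / pk)⌉) :
    (2 : ℝ) ^ (-l) ≤ pk / 2 := by
  have h1 : Real.logb 2 (2 / pk) ≤ (l : ℝ) := by rw [hl]; exact_mod_cast Int.le_ceil _
  have h2 : (2 : ℝ) / pk ≤ 2 ^ l := by
    calc (2 : ℝ) / pk = (2 : ℝ) ^ (Real.logb 2 (2 / pk)) :=
          (Real.rpow_logb two_pos (by norm_num) (by positivity)).symm
      _ ≤ (2 : ℝ) ^ ((l : ℝ)) := Real.rpow_le_rpow_of_exponent_le one_le_two h1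
      _ = 2 ^ l := Real.rpow_intCast 2 l
  have hpow : (0 : ℝ) < 2 ^ l := zpow_pos two_pos _
  rw [zpow_neg, inv_le_comm₀ hpow (by positivity), inv_div]
  exact h2

/-- With `S i = p i / 2 + ∑_{j<i} p j` and `ℓ i = ⌈log₂(2 / p i)⌉`, the first
`min (ℓ i) (ℓ j)` bits of the binary expansions of `S i` and `S j` differ for `i ≠ j`,
so the code whose `i`-th codeword is the first `ℓ i` bits of `S i` is prefix-free. -/
theorem stmt2 (n : ℕ) (p : Fin n → ℝ)
    (hp : ∀ i, 0 < p i) (hsum : ∑ i, p i = 1)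
    (S : Fin n → ℝ) (hS : ∀ i, S i = p i / 2 + ∑ j ∈ Finset.Iio i, p j)
    (ℓ : Fin n → ℤ) (hℓ : ∀ i, ℓ i = ⌈Real.logb 2 (2 / p i)⌉) :
    ∀ i j : Fin n, i ≠ j →
      ⌊(2 : ℝ) ^ (min (ℓ i) (ℓ j)) * S i⌋ ≠ ⌊(2 : ℝ) ^ (min (ℓ i) (ℓ j)) * S j⌋ := by
  intro i j hij h
  wlog hlt : i < j generalizing i j
  · exact this j i hij.symm (by rw [min_comm]; exact h.symm)
      (lt_of_le_of_ne (not_lt.1 hlt) hij.symm)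
  set m := min (ℓ i) (ℓ j) with hm
  -- S j - S i ≥ (p i + p j) / 2
  have hdiff : (p i + p j) / 2 ≤ S j - S i := by
    rw [hS, hS]
    have hsub : insert i (Finset.Iio i) ⊆ Finset.Iio j := by
      intro k hk
      simp only [Finset.mem_insert, Finset.mem_Iio] at hk ⊢
      rcases hk with rfl | hk
      · exact hlt
      · exact hk.trans hlt
    have hle := Finset.sum_le_sum_of_subset_of_nonneg hsub (fun k _ _ => (hp k).le)
    rw [Finset.sum_insert (by simp)] at hle
    linarith
  -- 2^(-m) ≤ (p i + p j)/2
  have h2m : (2 : ℝ) ^ (-m) ≤ (p i + p j) / 2 := by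
    rcases min_cases (ℓ i) (ℓ j) with ⟨he, _⟩ | ⟨he, _⟩
    · rw [hm, he]
      have := pow_neg_le_half (p i) (hp i) (ℓ i) (hℓ i)
      linarith [(hp j).le]
    · rw [hm, he]
      have := pow_neg_le_half (p j) (hp j) (ℓ j) (hℓ j)
      linarith [(hp i).le]
  have hpow : (0 : ℝ) < 2 ^ m := zpow_pos two_pos _
  have hone : (1 : ℝ) ≤ 2 ^ m * (S j - S i) := by
    have h1 : (2 : ℝ) ^ (-m) ≤ S j - S i := le_trans h2m hdiff
    have := mul_le_mul_of_nonneg_left h1 hpow.le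
    rwa [← zpow_add₀ (two_ne_zero) m (-m), add_neg_cancel, zpow_zero] at this
  have hfl1 : (2 : ℝ) ^ m * S j < ⌊(2 : ℝ) ^ m * S j⌋ + 1 := Int.lt_floor_add_one _
  have hfl2 : (⌊(2 : ℝ) ^ m * S i⌋ : ℝ) ≤ 2 ^ m * S i := Int.floor_le _
  rw [← h] at hfl1
  nlinarith
end

section
/- Given a probability distribution p_1, …, p_n on {1, …, n} with every p_i > 0, there exist natural numbers d_1, …, d_n such that, setting q_i = 2^{-d_i}, the numbers q_1, …, q_n form a probability distribution (that is, ∑_{i=1}^n 2^{-d_i} = 1), p_i < 4·q_i for every i, and D(P‖Q) = ∑_{i=1}^n p_i log₂(p_i/q_i) < 2. -/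
lemma kraft_complete {n : ℕ} (hn : 0 < n) (N : ℕ) :
    ∀ d : Fin n → ℕ, (∑ i, d i ≤ N) → (∑ i, (2:ℝ) ^ (-(d i:ℤ)) ≤ 1) →
    ∃ d' : Fin n → ℕ, (∀ i, d' i ≤ d i) ∧ ∑ i, (2:ℝ) ^ (-(d' i:ℤ)) = 1 := by
  induction N with
  | zero =>
      intro d hd hK
      have hall : ∀ i, d i = 0 := by
        intro i
        have := Finset.single_le_sum (f := d) (fun j _ => Nat.zero_le _) (Finset.mem_univ i)
        omega
      refine ⟨d, fun i => le_rfl, ?_⟩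
      have hK1 : ∑ i, (2:ℝ) ^ (-(d i:ℤ)) = n := by
        simp [hall]
      rw [hK1]
      have : (n:ℝ) ≤ 1 := by rw [← hK1]; exact hK
      have : n ≤ 1 := by exact_mod_cast this
      have : n = 1 := by omega
      simp [this]
  | succ N ih =>
      intro d hd hK
      rcases hK.lt_or_eq with h1 | h1
      · -- K < 1; find index of maximum
        obtain ⟨i₀, -, hmax⟩ := Finset.exists_max_image Finset.univ d
          (Finset.univ_nonempty_iff.mpr (Fin.pos_iff_nonempty.mp hn))
        set M := d i₀ with hM
        have hmax' : ∀ j, d j ≤ M := fun j => hmax j (Finset.mem_univ j)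
        -- M ≥ 1
        have hM1 : 1 ≤ M := by
          by_contra h
          have hM0 : M = 0 := by omega
          have hall : ∀ i, d i = 0 := fun i => by have := hmax' i; omega
          have : ∑ i, (2:ℝ) ^ (-(d i:ℤ)) = n := by simp [hall]
          rw [this] at h1
          have : (1:ℝ) ≤ n := by exact_mod_cast hn
          linarith
        -- integrality: K + 2^{-M} ≤ 1
        have hcast : ∀ j, ((2:ℝ) ^ (M - d j) : ℝ) = 2 ^ (M:ℕ) * (2:ℝ) ^ (-(d j:ℤ)) := by
          intro j
          have h1 : ((2:ℝ) ^ (M - d j) : ℝ) = (2:ℝ) ^ ((M - d j : ℕ) : ℤ) := by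
            rw [zpow_natCast]
          rw [h1, Nat.cast_sub (hmax' j), zpow_sub₀ (by norm_num)]
          rw [zpow_natCast]
          ring_nf
          rw [zpow_neg]
        have hS : ((∑ j, 2 ^ (M - d j) : ℕ) : ℝ) = 2 ^ (M:ℕ) * ∑ j, (2:ℝ) ^ (-(d j:ℤ)) := by
          push_cast
          rw [Finset.mul_sum]
          exact Finset.sum_congr rfl fun j _ => hcast j
        set S : ℕ := ∑ j, 2 ^ (M - d j) with hSdef
        have hSlt : (S:ℝ) < 2 ^ (M:ℕ) := by
          rw [hS]
          nlinarith [pow_pos (show (0:ℝ) < 2 by norm_num) M]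
        have hSlt' : S < 2 ^ M := by exact_mod_cast hSlt
        have hSle : (S:ℝ) + 1 ≤ 2 ^ (M:ℕ) := by
          have : S + 1 ≤ 2 ^ M := hSlt'
          exact_mod_cast this
        have hroom : ∑ j, (2:ℝ) ^ (-(d j:ℤ)) + (2:ℝ) ^ (-(M:ℤ)) ≤ 1 := by
          have h2M : (0:ℝ) < 2 ^ (M:ℕ) := pow_pos (by norm_num) M
          have hKeq : ∑ j, (2:ℝ) ^ (-(d j:ℤ)) = (S:ℝ) / 2 ^ (M:ℕ) := by
            field_simp [hS]
            rw [hS]; ring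
          have hMeq : (2:ℝ) ^ (-(M:ℤ)) = 1 / 2 ^ (M:ℕ) := by
            rw [zpow_neg, zpow_natCast]
            ring
          rw [hKeq, hMeq, ← add_div, div_le_one h2M]
          linarith
        -- update
        set d'' := Function.update d i₀ (M - 1) with hd''
        have hval : ∀ j, d'' j = if j = i₀ then M - 1 else d j := by
          intro j
          by_cases h : j = i₀ <;> simp [hd'', Function.update, h]
        have hle'' : ∀ j, d'' j ≤ d j := by
          intro j; rw [hval j]; split
          · rename_i h; subst h; omega
          · exact le_rfl
        have hsum'' : ∑ i, d'' i ≤ N := by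
          have h1 : ∑ i, d'' i = ∑ i, d i - 1 := by
            rw [Finset.sum_eq_sum_sdiff_singleton_add (Finset.mem_univ i₀) d'',
                Finset.sum_eq_sum_sdiff_singleton_add (Finset.mem_univ i₀) d]
            have he : ∑ i ∈ Finset.univ \ {i₀}, d'' i = ∑ i ∈ Finset.univ \ {i₀}, d i := by
              apply Finset.sum_congr rfl
              intro j hj
              rw [hval j]
              simp only [Finset.mem_sdiff, Finset.mem_singleton] at hj
              simp [hj.2]
            rw [he, hval i₀, if_pos rfl]
            omega
          omega
        have hK'' : ∑ i, (2:ℝ) ^ (-(d'' i:ℤ)) ≤ 1 := by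
          have hsplit : ∀ e : Fin n → ℕ, ∑ i, (2:ℝ) ^ (-(e i:ℤ)) =
              ∑ i ∈ Finset.univ \ {i₀}, (2:ℝ) ^ (-(e i:ℤ)) + (2:ℝ) ^ (-(e i₀:ℤ)) := by
            intro e
            exact Finset.sum_eq_sum_sdiff_singleton_add (Finset.mem_univ i₀) _
          rw [hsplit]
          have he : ∑ i ∈ Finset.univ \ {i₀}, (2:ℝ) ^ (-(d'' i:ℤ)) =
              ∑ i ∈ Finset.univ \ {i₀}, (2:ℝ) ^ (-(d i:ℤ)) := by
            apply Finset.sum_congr rfl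
            intro j hj
            simp only [Finset.mem_sdiff, Finset.mem_singleton] at hj
            rw [hval j]; simp [hj.2]
          rw [he]
          have hv : d'' i₀ = M - 1 := by rw [hval]; simp
          have hMv : ((M - 1 : ℕ) : ℤ) = (M:ℤ) - 1 := by
            rw [Nat.cast_sub hM1]; simp
          have : (2:ℝ) ^ (-(d'' i₀:ℤ)) = 2 * (2:ℝ) ^ (-(M:ℤ)) := by
            rw [hv, hMv]
            rw [neg_sub, sub_eq_add_neg, zpow_add₀ (by norm_num : (2:ℝ) ≠ 0)]
            ring
          rw [this]
          have hKsplit := hsplit d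
          rw [hKsplit] at hroom
          rw [hM] at hroom
          linarith
        obtain ⟨d', hd'le, hd'sum⟩ := ih d'' hsum'' hK''
        exact ⟨d', fun i => le_trans (hd'le i) (hle'' i), hd'sum⟩
      · exact ⟨d, fun i => le_rfl, h1⟩

/-- There exist natural numbers `d i` so that `q i = 2^{-d i}` is a probability
distribution with `p i < 4 q i` for all `i` and `D(P‖Q) < 2`. -/
theorem stmt3 (n : ℕ) (p : Fin n → ℝ)
    (hp : ∀ i, 0 < p i) (hsum : ∑ i, p i = 1) :
    ∃ d : Fin n → ℕ,
      (∑ i, (2 : ℝ) ^ (-(d i : ℤ)) = 1) ∧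
      (∀ i, p i < 4 * (2 : ℝ) ^ (-(d i : ℤ))) ∧
      ∑ i, p i * Real.logb 2 (p i / (2 : ℝ) ^ (-(d i : ℤ))) < 2 := by
  rcases Nat.eq_zero_or_pos n with hn | hn
  · subst hn; simp at hsum
  have hple : ∀ i, p i ≤ 1 := by
    intro i
    rw [← hsum]
    exact Finset.single_le_sum (fun j _ => (hp j).le) (Finset.mem_univ i)
  set d₀ : Fin n → ℕ := fun i => ⌈Real.logb 2 (p i)⁻¹⌉₊ with hd₀
  have hinv1 : ∀ i, 1 ≤ (p i)⁻¹ := fun i => (one_le_inv₀ (hp i)).mpr (hple i)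
  have hlognn : ∀ i, 0 ≤ Real.logb 2 (p i)⁻¹ := fun i =>
    Real.logb_nonneg one_lt_two (hinv1 i)
  have hrlog : ∀ i, (2:ℝ) ^ (Real.logb 2 (p i)⁻¹) = (p i)⁻¹ := fun i =>
    Real.rpow_logb two_pos (by norm_num) (inv_pos.mpr (hp i))
  have hpowpos : ∀ i, (0:ℝ) < 2 ^ (d₀ i) := fun i => pow_pos two_pos _
  have hzpow : ∀ (m : ℕ), (2:ℝ) ^ (-(m:ℤ)) = ((2:ℝ) ^ m)⁻¹ := by
    intro m; rw [zpow_neg, zpow_natCast]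
  -- q₀ i ≤ p i
  have h1 : ∀ i, (2:ℝ) ^ (-(d₀ i:ℤ)) ≤ p i := by
    intro i
    rw [hzpow]
    rw [← inv_inv (p i)]
    apply inv_anti₀ (inv_pos.mpr (hp i))
    calc (p i)⁻¹ = (2:ℝ) ^ (Real.logb 2 (p i)⁻¹) := (hrlog i).symm
      _ ≤ (2:ℝ) ^ ((d₀ i : ℕ) : ℝ) :=
        Real.rpow_le_rpow_of_exponent_le one_le_two (Nat.le_ceil _)
      _ = (2:ℝ) ^ (d₀ i) := Real.rpow_natCast 2 (d₀ i)
  -- p i < 2 * q₀ i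
  have h2 : ∀ i, p i < 2 * (2:ℝ) ^ (-(d₀ i:ℤ)) := by
    intro i
    rw [hzpow]
    have hlt : ((d₀ i : ℕ) : ℝ) < Real.logb 2 (p i)⁻¹ + 1 :=
      Nat.ceil_lt_add_one (hlognn i)
    have : (2:ℝ) ^ (d₀ i) < (p i)⁻¹ * 2 := by
      calc (2:ℝ) ^ (d₀ i) = (2:ℝ) ^ ((d₀ i : ℕ) : ℝ) := (Real.rpow_natCast 2 (d₀ i)).symm
        _ < (2:ℝ) ^ (Real.logb 2 (p i)⁻¹ + 1) :=
          Real.rpow_lt_rpow_of_exponent_lt one_lt_two hlt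
        _ = (p i)⁻¹ * 2 := by
          rw [Real.rpow_add two_pos, hrlog i, Real.rpow_one]
    have hppos := hp i
    have h2' : p i * (2:ℝ) ^ (d₀ i) < 2 := by
      have := mul_lt_mul_of_pos_left this hppos
      rw [← mul_assoc, mul_inv_cancel₀ (ne_of_gt hppos), one_mul] at this
      exact this
    calc p i = p i * (2:ℝ) ^ (d₀ i) * ((2:ℝ) ^ (d₀ i))⁻¹ := by
          field_simp
      _ < 2 * ((2:ℝ) ^ (d₀ i))⁻¹ :=
          mul_lt_mul_of_pos_right h2' (inv_pos.mpr (hpowpos i))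
  have hKraft : ∑ i, (2:ℝ) ^ (-(d₀ i:ℤ)) ≤ 1 := by
    rw [← hsum]
    exact Finset.sum_le_sum fun i _ => h1 i
  obtain ⟨d, hle, hsum1⟩ := kraft_complete hn (∑ i, d₀ i) d₀ le_rfl hKraft
  have hqmono : ∀ i, (2:ℝ) ^ (-(d₀ i:ℤ)) ≤ (2:ℝ) ^ (-(d i:ℤ)) := by
    intro i
    apply zpow_le_zpow_right₀ one_le_two
    exact neg_le_neg (by exact_mod_cast hle i)
  have hqpos : ∀ i, (0:ℝ) < (2:ℝ) ^ (-(d i:ℤ)) := fun i => zpow_pos two_pos _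
  have h2' : ∀ i, p i < 2 * (2:ℝ) ^ (-(d i:ℤ)) := fun i =>
    lt_of_lt_of_le (h2 i) (by linarith [hqmono i])
  refine ⟨d, hsum1, fun i => lt_of_lt_of_le (h2' i) (by linarith [hqpos i]), ?_⟩
  have hterm : ∀ i, p i * Real.logb 2 (p i / (2:ℝ) ^ (-(d i:ℤ))) < p i := by
    intro i
    have hratpos : 0 < p i / (2:ℝ) ^ (-(d i:ℤ)) := div_pos (hp i) (hqpos i)
    have hratlt : p i / (2:ℝ) ^ (-(d i:ℤ)) < 2 :=
      (div_lt_iff₀ (hqpos i)).mpr (by linarith [h2' i])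
    have hlog1 : Real.logb 2 (p i / (2:ℝ) ^ (-(d i:ℤ))) < 1 := by
      calc Real.logb 2 (p i / (2:ℝ) ^ (-(d i:ℤ))) < Real.logb 2 2 :=
            Real.logb_lt_logb one_lt_two hratpos hratlt
        _ = 1 := Real.logb_self_eq_one one_lt_two
    calc p i * Real.logb 2 (p i / (2:ℝ) ^ (-(d i:ℤ))) < p i * 1 :=
          mul_lt_mul_of_pos_left hlog1 (hp i)
      _ = p i := mul_one _
  have : ∑ i, p i * Real.logb 2 (p i / (2:ℝ) ^ (-(d i:ℤ))) < ∑ i, p i :=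
    Finset.sum_lt_sum_of_nonempty (Finset.univ_nonempty_iff.mpr (Fin.pos_iff_nonempty.mp hn))
      fun i _ => hterm i
  rw [hsum] at this
  linarith
end

section
/- Let k ≥ 3 be an integer, let P = p_1, …, p_n be a probability distribution on {1, …, n} with every p_i > 0, and let Q' = q'_1, …, q'_n be a probability distribution with every q'_i > 0 satisfying p_i / q'_i < 2 + 1/2^{k-4} for all i. Let B = { i : p_i / q'_i ≥ 1 + 1/2^{k-3} }, let N = ∑_{i ∈ B} 2 q'_i + ∑_{i ∉ B} q'_i, and define q_i = 2 q'_i / N for i ∈ B and q_i = q'_i / N for i ∉ B. Then q_1, …, q_n is a probability distribution with every q_i > 0, and p_i / q_i < 2 + 1/2^{k-3} for every i. -/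
/-- Inductive step of the tradeoff theorem: doubling the probabilities on `B` and
renormalizing yields a probability distribution with `p i / q i < 2 + 1/2^{k-3}`. -/
theorem stmt7 (n : ℕ) (k : ℕ) (hk : 3 ≤ k)
    (p q' : Fin n → ℝ)
    (hp : ∀ i, 0 < p i) (hpsum : ∑ i, p i = 1)
    (hq' : ∀ i, 0 < q' i) (hq'sum : ∑ i, q' i = 1)
    (hratio : ∀ i, p i / q' i < 2 + 1 / (2 : ℝ) ^ ((k : ℤ) - 4))
    (B : Finset (Fin n))
    (hB : ∀ i, i ∈ B ↔ 1 + 1 / (2 : ℝ) ^ ((k : ℤ) - 3) ≤ p i / q' i)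
    (N : ℝ) (hN : N = ∑ i ∈ B, 2 * q' i + ∑ i ∈ Bᶜ, q' i)
    (q : Fin n → ℝ)
    (hq : ∀ i, q i = if i ∈ B then 2 * q' i / N else q' i / N) :
    (∀ i, 0 < q i) ∧ (∑ i, q i = 1) ∧
      ∀ i, p i / q i < 2 + 1 / (2 : ℝ) ^ ((k : ℤ) - 3) := by
  set ε : ℝ := 1 / (2 : ℝ) ^ ((k : ℤ) - 3) with hε
  have hεpos : 0 < ε := by positivity
  have hε4 : 1 / (2 : ℝ) ^ ((k : ℤ) - 4) = 2 * ε := by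
    rw [hε]
    have : ((k : ℤ) - 4) = ((k : ℤ) - 3) - 1 := by ring
    rw [this, zpow_sub_one₀ (by norm_num : (2:ℝ) ≠ 0)]
    field_simp
  -- N = 1 + ∑_B q'
  have hsplit : ∑ i ∈ B, q' i + ∑ i ∈ Bᶜ, q' i = 1 := by
    rw [Finset.sum_add_sum_compl, hq'sum]
  have hN1 : N = 1 + ∑ i ∈ B, q' i := by
    rw [hN]
    have : ∑ i ∈ B, 2 * q' i = ∑ i ∈ B, q' i + ∑ i ∈ B, q' i := by
      rw [← Finset.sum_add_distrib]; congr 1; ext i; ring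
    linarith
  have hBnn : 0 ≤ ∑ i ∈ B, q' i :=
    Finset.sum_nonneg fun i _ => (hq' i).le
  have hNge1 : 1 ≤ N := by linarith
  have hNpos : 0 < N := by linarith
  -- bound on ∑_B q'
  have hBle : (1 + ε) * ∑ i ∈ B, q' i ≤ 1 := by
    have h1 : ∀ i ∈ B, (1 + ε) * q' i ≤ p i := by
      intro i hi
      have := (hB i).mp hi
      have hq'i := hq' i
      rw [le_div_iff₀ hq'i] at this
      nlinarith
    have h2 : (1 + ε) * ∑ i ∈ B, q' i ≤ ∑ i ∈ B, p i := by
      rw [Finset.mul_sum]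
      exact Finset.sum_le_sum h1
    have h3 : ∑ i ∈ B, p i ≤ 1 := by
      rw [← hpsum]
      exact Finset.sum_le_sum_of_subset_of_nonneg (Finset.subset_univ B)
        (fun i _ _ => (hp i).le)
    linarith
  have hNle : (1 + ε) * N ≤ 2 + ε := by
    rw [hN1]; nlinarith
  refine ⟨?_, ?_, ?_⟩
  · intro i
    rw [hq i]
    split
    · exact div_pos (by linarith [hq' i]) hNpos
    · exact div_pos (hq' i) hNpos
  · have : ∑ i, q i = ∑ i ∈ B, q i + ∑ i ∈ Bᶜ, q i := (Finset.sum_add_sum_compl B q).symm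
    rw [this]
    have h1 : ∑ i ∈ B, q i = ∑ i ∈ B, 2 * q' i / N := by
      apply Finset.sum_congr rfl; intro i hi; rw [hq i, if_pos hi]
    have h2 : ∑ i ∈ Bᶜ, q i = ∑ i ∈ Bᶜ, q' i / N := by
      apply Finset.sum_congr rfl; intro i hi
      rw [hq i, if_neg (Finset.mem_compl.mp hi)]
    rw [h1, h2, ← Finset.sum_div, ← Finset.sum_div]
    field_simp
    linarith [hN]
  · intro i
    have hq'i := hq' i
    have hpi := hp i
    rw [hq i]
    by_cases hi : i ∈ B
    · rw [if_pos hi]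
      have hr := hratio i
      rw [hε4] at hr
      rw [div_div_eq_mul_div, div_lt_iff₀ (by positivity)]
      have hpq : p i < (2 + 2 * ε) * q' i := by
        rw [div_lt_iff₀ hq'i] at hr; linarith
      calc p i * N < (2 + 2 * ε) * q' i * N := by nlinarith
        _ = ((1 + ε) * N) * (2 * q' i) := by ring
        _ ≤ (2 + ε) * (2 * q' i) := by nlinarith
    · rw [if_neg hi]
      have hr : p i / q' i < 1 + ε := by
        by_contra h
        exact hi ((hB i).mpr (le_of_not_gt h))
      rw [div_lt_iff₀ hq'i] at hr
      rw [div_div_eq_mul_div, div_lt_iff₀ (by positivity)]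
      calc p i * N < ((1 + ε) * q' i) * N := by nlinarith
        _ = ((1 + ε) * N) * q' i := by ring
        _ ≤ (2 + ε) * q' i := by nlinarith
end

section
/- Let P = p_1, …, p_n be a probability distribution on {1, …, n} with every p_i > 0, let c ≥ 1 be real, let r_1, …, r_t be distinct elements of {1, …, n} with p_{r_1} ≥ p_{r_2} ≥ … ≥ p_{r_t}, and suppose p_i ≤ 1/n^{1/(c+1)} for every i ∉ R, where R = {r_1, …, r_t}. Then H(P) ≥ ∑_{j=1}^t p_{r_j} log₂ j + (1/(c+1)) · ∑_{i ∉ R} p_i log₂ n. -/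
/-- Entropy lower bound: if the `t` largest probabilities are `p (r 1) ≥ … ≥ p (r t)`
and all probabilities outside `R` are at most `n^{-1/(c+1)}`, then
`H(P) ≥ ∑_j p_{r_j} log₂ j + (∑_{i∉R} p_i log₂ n)/(c+1)`. -/
theorem stmt10 (n t : ℕ) (p : Fin n → ℝ) (c : ℝ) (hc : 1 ≤ c)
    (hp : ∀ i, 0 < p i) (hsum : ∑ i, p i = 1)
    (r : Fin t → Fin n) (hr : Function.Injective r)
    (hord : ∀ j j' : Fin t, j ≤ j' → p (r j') ≤ p (r j))
    (hsmall : ∀ i, i ∉ Set.range r → p i ≤ 1 / (n : ℝ) ^ (1 / (c + 1))) :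
    ∑ i, p i * Real.logb 2 (1 / p i) ≥
      ∑ j : Fin t, p (r j) * Real.logb 2 (j.val + 1) +
        (1 / (c + 1)) *
          ∑ i ∈ (Finset.image r Finset.univ)ᶜ, p i * Real.logb 2 n := by
  have hn : 0 < (n:ℝ) := by
    rcases Nat.eq_zero_or_pos n with h | h
    · exfalso; subst h; simp at hsum
    · exact_mod_cast h
  have h2 : (1:ℝ) < 2 := one_lt_two
  have hinj : ∀ x ∈ Finset.univ, ∀ y ∈ Finset.univ, r x = r y → x = y :=
    fun x _ y _ h => hr h
  have hple : ∀ j : Fin t, (j.val + 1 : ℝ) * p (r j) ≤ 1 := by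
    intro j
    have hcard : (Finset.Iic j).card = j.val + 1 := by
      simp [Nat.card_Iic]
    have hsub : ∑ j' ∈ Finset.Iic j, p (r j') ≤ 1 := by
      rw [← hsum]
      calc ∑ j' ∈ Finset.Iic j, p (r j')
          = ∑ i ∈ (Finset.Iic j).image r, p i :=
            (Finset.sum_image (fun x _ y _ h => hr h)).symm
        _ ≤ ∑ i, p i := Finset.sum_le_sum_of_subset_of_nonneg
            (Finset.subset_univ _) (fun i _ _ => (hp i).le)
    have hmono : ∑ j' ∈ Finset.Iic j, p (r j) ≤ ∑ j' ∈ Finset.Iic j, p (r j') :=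
      Finset.sum_le_sum fun j' hj' => hord _ _ (Finset.mem_Iic.mp hj')
    have hconst : ∑ j' ∈ Finset.Iic j, p (r j) = (j.val + 1 : ℝ) * p (r j) := by
      rw [Finset.sum_const, hcard, nsmul_eq_mul]; push_cast; ring
    linarith
  rw [ge_iff_le, ← Finset.sum_add_sum_compl (Finset.image r Finset.univ)
    (fun i => p i * Real.logb 2 (1 / p i))]
  apply add_le_add
  · rw [Finset.sum_image hinj]
    apply Finset.sum_le_sum
    intro j _
    apply mul_le_mul_of_nonneg_left _ (hp _).le
    have hjpos : (0:ℝ) < (j.val : ℝ) + 1 := by positivity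
    have hle : ((j.val : ℝ) + 1) ≤ 1 / p (r j) := by
      rw [le_div_iff₀ (hp _)]; exact hple j
    have := Real.log_le_log hjpos hle
    rw [Real.logb, Real.logb]
    exact div_le_div_of_nonneg_right this (Real.log_pos h2).le |>.trans_eq rfl
  · rw [Finset.mul_sum]
    apply Finset.sum_le_sum
    intro i hi
    have hi' : i ∉ Set.range r := by
      simp only [Finset.mem_compl, Finset.mem_image, Finset.mem_univ, true_and] at hi
      rintro ⟨j, rfl⟩; exact hi ⟨j, rfl⟩
    have hsm := hsmall i hi'
    have hpow : (0:ℝ) < (n:ℝ) ^ (1/(c+1)) := Real.rpow_pos_of_pos hn _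
    have h1 : (n:ℝ) ^ (1/(c+1)) ≤ 1 / p i := by
      rw [le_div_iff₀ (hp i)]
      calc (n:ℝ)^(1/(c+1)) * p i ≤ (n:ℝ)^(1/(c+1)) * (1/(n:ℝ)^(1/(c+1))) :=
            mul_le_mul_of_nonneg_left hsm hpow.le
        _ = 1 := by field_simp
    have hlog : (1/(c+1)) * Real.logb 2 n ≤ Real.logb 2 (1 / p i) := by
      have heq : (1/(c+1)) * Real.logb 2 n = Real.logb 2 ((n:ℝ)^(1/(c+1))) := by
        rw [Real.logb, Real.logb, Real.log_rpow hn]; ring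
      rw [heq, Real.logb, Real.logb]
      exact div_le_div_of_nonneg_right (Real.log_le_log hpow h1) (Real.log_pos h2).le
    calc 1/(c+1) * (p i * Real.logb 2 n) = p i * ((1/(c+1)) * Real.logb 2 n) := by ring
      _ ≤ p i * Real.logb 2 (1 / p i) := mul_le_mul_of_nonneg_left hlog (hp i).le
end
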